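/- For every real number x > 0, the integral ∫_x^∞ e^{-t}/t dt equals -γ - log x - ∑_{k=1}^∞ (-x)^k / (k · k!), where γ is the Euler–Mascheroni constant; that is, the integral definition of the exponential integral E₁ on the positive real axis agrees with its series expansion. -/

import Mathlib

set_option maxHeartbeats 1000000

open MeasureTheory Set Filter Topology Real

lemma gammaConst : ∫ t in Set.Ioi (0:ℝ), Real.log t * Real.exp (-t) =
    -Real.eulerMascheroniConstant := by
  have h1 : HasDerivAt Complex.GammaIntegral
      (∫ t : ℝ in Ioi 0, (t:ℂ) ^ ((1:ℂ) - 1) * (Real.log t * Real.exp (-t))) 1 :=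
    Complex.hasDerivAt_GammaIntegral (by norm_num)
  have h2 : HasDerivAt Complex.GammaIntegral (-(Real.eulerMascheroniConstant : ℂ)) 1 := by
    refine Complex.hasDerivAt_Gamma_one.congr_of_eventuallyEq ?_
    have : {s : ℂ | 0 < s.re} ∈ 𝓝 (1:ℂ) := by
      refine IsOpen.mem_nhds ?_ (by norm_num)
      exact isOpen_lt continuous_const Complex.continuous_re
    filter_upwards [this] with s hs
    exact (Complex.Gamma_eq_integral hs).symm
  have h3 := h2.unique h1
  have h4 : (∫ t : ℝ in Ioi 0, (t:ℂ) ^ ((1:ℂ) - 1) * (Real.log t * Real.exp (-t)))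
      = ((∫ t in Set.Ioi (0:ℝ), Real.log t * Real.exp (-t) : ℝ) : ℂ) := by
    rw [show (∫ t : ℝ in Ioi 0, (t:ℂ) ^ ((1:ℂ) - 1) * (Real.log t * Real.exp (-t)))
        = ∫ t : ℝ in Ioi 0, ((Real.log t * Real.exp (-t) : ℝ) : ℂ) from
      setIntegral_congr_fun measurableSet_Ioi (fun t ht => by
        simp [Complex.cpow_zero, Complex.ofReal_mul])]
    exact integral_ofReal
  rw [h4] at h3
  exact_mod_cast h3.symm

lemma integral_Ioc_of_hasDerivAt_of_tendsto' {a b m : ℝ} (hab : a < b) {f f' : ℝ → ℝ}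
    (hd : ∀ t ∈ Set.Ioc a b, HasDerivAt f (f' t) t)
    (hint : IntegrableOn f' (Set.Ioc a b))
    (hm : Tendsto f (𝓝[>] a) (𝓝 m)) :
    ∫ t in Set.Ioc a b, f' t = f b - m := by
  set u : ℕ → ℝ := fun n => a + (b - a) / (n + 1) with hu
  have hba : 0 < b - a := by linarith
  have hua : ∀ n, a < u n := fun n => by
    have : 0 < (b - a) / (n + 1) := by positivity
    simp only [hu]; linarith
  have hub : ∀ n, u n ≤ b := fun n => by
    have h1 : (b - a) / ((n:ℝ) + 1) ≤ (b - a) / 1 := by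
      apply div_le_div_of_nonneg_left hba.le one_pos
      exact_mod_cast Nat.le_add_left 1 n  -- 1 ≤ n+1
    simp only [hu]; simp at h1 ⊢; linarith
  have huanti : ∀ ⦃i j : ℕ⦄, i ≤ j → u j ≤ u i := by
    intro i j hij
    simp only [hu]
    have : (b - a) / ((j:ℝ) + 1) ≤ (b - a) / ((i:ℝ) + 1) := by
      apply div_le_div_of_nonneg_left hba.le (by positivity)
      exact_mod_cast by omega
    linarith
  have hmono : Monotone (fun n => Set.Ioc (u n) b) := by
    intro i j hij
    exact Set.Ioc_subset_Ioc_left (huanti hij)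
  have hulim : Tendsto u atTop (𝓝[>] a) := by
    refine tendsto_nhdsWithin_of_tendsto_nhds_of_eventually_within _ ?_
      (Eventually.of_forall hua)
    have : Tendsto (fun n : ℕ => (b - a) / (n + 1)) atTop (𝓝 0) := by
      apply Tendsto.div_atTop tendsto_const_nhds
      exact tendsto_atTop_add_const_right _ 1 tendsto_natCast_atTop_atTop
    simpa using tendsto_const_nhds.add this
  have hunion : (⋃ n, Set.Ioc (u n) b) = Set.Ioc a b := by
    apply Set.Subset.antisymm
    · exact Set.iUnion_subset fun n => Set.Ioc_subset_Ioc_left (hua n).le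
    · intro t ht
      have hta : 0 < t - a := by linarith [ht.1]
      obtain ⟨n, hn⟩ := exists_nat_gt ((b - a) / (t - a))
      refine Set.mem_iUnion.mpr ⟨n, ?_, ht.2⟩
      have h1 : (b - a) / (t - a) < (n:ℝ) + 1 := by linarith
      have : (b - a) / ((n:ℝ) + 1) < t - a := by
        rw [div_lt_iff₀ (by positivity)]
        rw [div_lt_iff₀ hta] at h1
        linarith
      simp only [hu]; linarith
  have h1 : Tendsto (fun n => ∫ t in Set.Ioc (u n) b, f' t) atTop
      (𝓝 (∫ t in Set.Ioc a b, f' t)) := by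
    have := tendsto_setIntegral_of_monotone (fun n => measurableSet_Ioc) hmono
      (hunion ▸ hint)
    rwa [hunion] at this
  have h2 : ∀ n, ∫ t in Set.Ioc (u n) b, f' t = f b - f (u n) := by
    intro n
    rw [← intervalIntegral.integral_of_le (hub n)]
    apply intervalIntegral.integral_eq_sub_of_hasDerivAt_of_le (hub n)
    · intro t ht
      exact (hd t ⟨lt_of_lt_of_le (hua n) ht.1, ht.2⟩).continuousAt.continuousWithinAt
    · intro t ht
      exact hd t ⟨(hua n).trans ht.1, ht.2.le⟩
    · rw [intervalIntegrable_iff_integrableOn_Ioc_of_le (hub n)]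
      exact hint.mono_set (Set.Ioc_subset_Ioc_left (hua n).le)
  have h3 : Tendsto (fun n => f b - f (u n)) atTop (𝓝 (f b - m)) :=
    tendsto_const_nhds.sub (hm.comp hulim)
  exact tendsto_nhds_unique (h1.congr fun n => (h2 n)) ((funext h2) ▸ h3)

lemma intLogExp : IntegrableOn (fun t : ℝ => Real.log t * Real.exp (-t)) (Set.Ioi 0) := by
  have h1 : IntegrableOn (fun t : ℝ => Real.log t * Real.exp (-t)) (Set.Ioc 0 1) := by
    have hbound : IntegrableOn (fun t : ℝ => 2 * t ^ (-(1/2) : ℝ)) (Set.Ioc 0 1) := by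
      have := intervalIntegral.intervalIntegrable_rpow' (a := 0) (b := 1)
        (by norm_num : (-1:ℝ) < -(1/2))
      rw [intervalIntegrable_iff_integrableOn_Ioc_of_le zero_le_one] at this
      exact this.const_mul 2
    refine Integrable.mono hbound ?_ ?_
    · apply (ContinuousOn.aestronglyMeasurable ?_ measurableSet_Ioc)
      exact ((Real.continuousOn_log.mono (fun t ht => ne_of_gt ht.1)).mul
        ((Real.continuous_exp.comp continuous_neg).continuousOn))
    · filter_upwards [ae_restrict_mem measurableSet_Ioc] with t ht
      have ht0 : (0:ℝ) < t := ht.1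
      rw [Real.norm_eq_abs, Real.norm_eq_abs, abs_mul]
      have hlog : |Real.log t| ≤ 2 * t ^ (-(1/2) : ℝ) := by
        rw [abs_of_nonpos (Real.log_nonpos ht0.le ht.2)]
        have h5 : Real.log (t ^ (-(1/2) : ℝ)) = (-(1/2) : ℝ) * Real.log t :=
          Real.log_rpow ht0 _
        have h3 : Real.log (t ^ (-(1/2) : ℝ)) ≤ t ^ (-(1/2) : ℝ) - 1 :=
          Real.log_le_sub_one_of_pos (Real.rpow_pos_of_pos ht0 _)
        rw [h5] at h3
        linarith
      calc |Real.log t| * |Real.exp (-t)| ≤ |Real.log t| * 1 := by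
            apply mul_le_mul_of_nonneg_left _ (abs_nonneg _)
            rw [abs_of_pos (Real.exp_pos _)]
            exact Real.exp_le_one_iff.mpr (by linarith)
        _ ≤ 2 * t ^ (-(1/2) : ℝ) := by rw [mul_one]; exact hlog
      rw [abs_of_nonneg]
      positivity
  have h2 : IntegrableOn (fun t : ℝ => Real.log t * Real.exp (-t)) (Set.Ioi 1) := by
    have hbound : IntegrableOn (fun t : ℝ => Real.exp (-t) * t ^ ((2:ℝ) - 1)) (Set.Ioi 1) :=
      (Real.GammaIntegral_convergent zero_lt_two).mono_set
        (Set.Ioi_subset_Ioi zero_le_one)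
    refine Integrable.mono hbound ?_ ?_
    · apply (ContinuousOn.aestronglyMeasurable ?_ measurableSet_Ioi)
      exact ((Real.continuousOn_log.mono (fun t ht =>
          ne_of_gt (lt_trans zero_lt_one ht))).mul
        ((Real.continuous_exp.comp continuous_neg).continuousOn))
    · filter_upwards [ae_restrict_mem measurableSet_Ioi] with t ht
      have ht1 : (1:ℝ) < t := ht
      rw [Real.norm_eq_abs, Real.norm_eq_abs, abs_mul]
      have h3 : |Real.log t| ≤ t := by
        rw [abs_of_nonneg (Real.log_nonneg ht1.le)]
        linarith [Real.log_le_sub_one_of_pos (by linarith : (0:ℝ) < t)]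
      have h4 : Real.exp (-t) * t ^ ((2:ℝ)-1) = t * Real.exp (-t) := by
        rw [show (2:ℝ)-1 = 1 by norm_num, Real.rpow_one]; ring
      rw [abs_of_nonneg (by positivity : (0:ℝ) ≤ Real.exp (-t) * t ^ ((2:ℝ)-1)), h4]
      calc |Real.log t| * |Real.exp (-t)| ≤ t * |Real.exp (-t)| :=
            mul_le_mul_of_nonneg_right h3 (abs_nonneg _)
        _ = t * Real.exp (-t) := by rw [abs_of_pos (Real.exp_pos _)]
  have := h1.union h2
  rwa [Set.Ioc_union_Ioi_eq_Ioi zero_le_one] at this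

lemma intExpDiv {x : ℝ} (hx : 0 < x) :
    IntegrableOn (fun t : ℝ => Real.exp (-t) / t) (Set.Ioi x) := by
  have hbound : IntegrableOn (fun t : ℝ => x⁻¹ * Real.exp (-1 * t)) (Set.Ioi x) :=
    (exp_neg_integrableOn_Ioi x one_pos).const_mul _
  refine Integrable.mono hbound ?_ ?_
  · apply (ContinuousOn.aestronglyMeasurable ?_ measurableSet_Ioi)
    exact ((Real.continuous_exp.comp continuous_neg).continuousOn.div
      continuousOn_id (fun t ht => ne_of_gt (hx.trans ht)))
  · filter_upwards [ae_restrict_mem measurableSet_Ioi] with t ht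
    have htx : x < t := ht
    have ht0 : 0 < t := hx.trans htx
    rw [Real.norm_eq_abs, Real.norm_eq_abs, neg_one_mul,
      abs_of_pos (by positivity : (0:ℝ) < Real.exp (-t) / t),
      abs_of_pos (by positivity : (0:ℝ) < x⁻¹ * Real.exp (-t))]
    rw [div_eq_mul_inv, mul_comm (x⁻¹)]
    apply mul_le_mul_of_nonneg_left _ (Real.exp_pos _).le
    exact inv_anti₀ hx htx.le

lemma intOneSubExpDiv {x : ℝ} (hx : 0 < x) :
    IntegrableOn (fun t : ℝ => (1 - Real.exp (-t)) / t) (Set.Ioc 0 x) := by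
  have hbound : IntegrableOn (fun _ : ℝ => (1:ℝ)) (Set.Ioc 0 x) :=
    integrableOn_const measure_Ioc_lt_top.ne
  refine Integrable.mono hbound ?_ ?_
  · apply (ContinuousOn.aestronglyMeasurable ?_ measurableSet_Ioc)
    exact (((continuous_const.sub (Real.continuous_exp.comp continuous_neg)).continuousOn).div
      continuousOn_id (fun t ht => ne_of_gt ht.1))
  · filter_upwards [ae_restrict_mem measurableSet_Ioc] with t ht
    have ht0 : (0:ℝ) < t := ht.1
    have hle : 1 - Real.exp (-t) ≤ t := by
      have := Real.add_one_le_exp (-t)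
      linarith
    have hnn : 0 ≤ 1 - Real.exp (-t) := by
      have : Real.exp (-t) ≤ 1 := Real.exp_le_one_iff.mpr (by linarith)
      linarith
    rw [Real.norm_eq_abs, Real.norm_eq_abs, abs_one,
      abs_of_nonneg (by positivity : (0:ℝ) ≤ (1 - Real.exp (-t)) / t)]
    rw [div_le_one ht0]
    exact hle

lemma ptwise {t : ℝ} (ht : 0 < t) :
    (1 - Real.exp (-t)) / t
      = ∑' k : ℕ, (-1:ℝ)^k * t^k / (Nat.factorial (k+1) : ℝ) := by
  have hs : Summable fun n : ℕ => (-t)^n / (Nat.factorial n : ℝ) :=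
    Real.summable_pow_div_factorial (-t)
  have hexp : Real.exp (-t) = ∑' n : ℕ, (-t)^n / (Nat.factorial n : ℝ) := by
    rw [Real.exp_eq_exp_ℝ, NormedSpace.exp_eq_tsum_div]
  have h1 : 1 - Real.exp (-t)
      = ∑' k : ℕ, -((-t)^(k+1) / (Nat.factorial (k+1) : ℝ)) := by
    rw [hexp, Summable.tsum_eq_zero_add hs, tsum_neg]
    simp
  rw [h1, ← tsum_div_const]
  apply tsum_congr
  intro k
  have hc : (Nat.factorial (k+1) : ℝ) ≠ 0 := by positivity
  rw [neg_pow, pow_succ]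
  field_simp
  ring

lemma seriesInt {x : ℝ} (hx : 0 < x) :
    ∫ t in Set.Ioc 0 x, (1 - Real.exp (-t)) / t
      = ∑' k : ℕ, (-1:ℝ)^k * x^(k+1) / ((k+1) * (Nat.factorial (k+1) : ℝ)) := by
  set F : ℕ → ℝ → ℝ := fun k t => (-1:ℝ)^k * t^k / (Nat.factorial (k+1) : ℝ) with hF
  have hcont : ∀ k, Continuous (F k) := by
    intro k
    simp only [hF]
    fun_prop
  have hFint : ∀ k, Integrable (F k) (volume.restrict (Set.Ioc 0 x)) := fun k =>
    (hcont k).integrableOn_Ioc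
  have hval : ∀ k, ∫ t in Set.Ioc 0 x, F k t
      = (-1:ℝ)^k * x^(k+1) / ((k+1) * (Nat.factorial (k+1) : ℝ)) := by
    intro k
    simp only [hF]
    rw [← intervalIntegral.integral_of_le hx.le]
    rw [intervalIntegral.integral_div, intervalIntegral.integral_const_mul,
      integral_pow]
    have h1 : (Nat.factorial (k+1) : ℝ) ≠ 0 := by positivity
    have h2 : ((k:ℝ)+1) ≠ 0 := by positivity
    field_simp
    simp
  have hnormval : ∀ k, ∫ t in Set.Ioc 0 x, ‖F k t‖
      = x^(k+1) / ((k+1) * (Nat.factorial (k+1) : ℝ)) := by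
    intro k
    have : ∀ t ∈ Set.Ioc (0:ℝ) x, ‖F k t‖ = t^k / (Nat.factorial (k+1) : ℝ) := by
      intro t ht
      simp only [hF]
      rw [Real.norm_eq_abs, abs_div, abs_mul, abs_pow, abs_pow, abs_neg, abs_one,
        one_pow, one_mul, abs_of_nonneg ht.1.le, abs_of_nonneg
        (by positivity : (0:ℝ) ≤ (Nat.factorial (k+1) : ℝ))]
    rw [setIntegral_congr_fun measurableSet_Ioc this]
    rw [← intervalIntegral.integral_of_le hx.le, intervalIntegral.integral_div,
      integral_pow]
    have h1 : (Nat.factorial (k+1) : ℝ) ≠ 0 := by positivity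
    have h2 : ((k:ℝ)+1) ≠ 0 := by positivity
    field_simp
    simp
  have hsum : Summable fun k : ℕ => ∫ t in Set.Ioc 0 x, ‖F k t‖ := by
    rw [funext hnormval]
    apply Summable.of_nonneg_of_le (fun k => by positivity)
      (fun k => ?_) ((Real.summable_pow_div_factorial x).mul_left x)
    have h3 : (Nat.factorial k : ℝ) ≤ ((k:ℝ)+1) * (Nat.factorial (k+1) : ℝ) := by
      have := Nat.factorial_le (Nat.le_succ k)
      have h4 : (1:ℝ) ≤ (k:ℝ)+1 := by have := Nat.cast_nonneg (α := ℝ) k; linarith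
      calc (Nat.factorial k : ℝ) ≤ (Nat.factorial (k+1) : ℝ) := by exact_mod_cast this
        _ ≤ ((k:ℝ)+1) * (Nat.factorial (k+1) : ℝ) := le_mul_of_one_le_left (by positivity) h4
    rw [show x * (x^k / (Nat.factorial k : ℝ)) = x^(k+1) / (Nat.factorial k : ℝ) by
      rw [pow_succ]; ring]
    exact div_le_div_of_nonneg_left (by positivity)
      (by positivity : (0:ℝ) < (Nat.factorial k : ℝ)) h3
  have key := MeasureTheory.integral_tsum_of_summable_integral_norm hFint hsum
  have hcongr : ∫ t in Set.Ioc 0 x, (∑' k, F k t)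
      = ∫ t in Set.Ioc 0 x, (1 - Real.exp (-t)) / t := by
    refine setIntegral_congr_fun measurableSet_Ioc (fun t ht => ?_)
    exact (ptwise ht.1).symm
  rw [hcongr] at key
  rw [← key]
  exact tsum_congr hval



lemma IBP1 {x : ℝ} (hx : 0 < x) :
    ∫ t in Set.Ioi x, (Real.exp (-t) / t - Real.log t * Real.exp (-t))
      = -(Real.exp (-x) * Real.log x) := by
  have hint : IntegrableOn
      (fun t : ℝ => Real.exp (-t) / t - Real.log t * Real.exp (-t)) (Set.Ioi x) :=
    (intExpDiv hx).sub (intLogExp.mono_set (Set.Ioi_subset_Ioi hx.le))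
  have hderiv : ∀ t ∈ Set.Ici x, HasDerivAt (fun t : ℝ => Real.exp (-t) * Real.log t)
      (Real.exp (-t) / t - Real.log t * Real.exp (-t)) t := by
    intro t ht
    have ht0 : 0 < t := lt_of_lt_of_le hx ht
    have h1 : HasDerivAt (fun t : ℝ => Real.exp (-t)) (Real.exp (-t) * (-1)) t :=
      (hasDerivAt_neg t).exp
    have h2 := h1.mul (Real.hasDerivAt_log ht0.ne')
    refine h2.congr_deriv ?_
    field_simp
    ring
  have hlim : Tendsto (fun t : ℝ => Real.exp (-t) * Real.log t) atTop (𝓝 0) := by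
    have hup : Tendsto (fun t : ℝ => t ^ 1 * Real.exp (-t)) atTop (𝓝 0) :=
      tendsto_pow_mul_exp_neg_atTop_nhds_zero 1
    simp only [pow_one] at hup
    refine tendsto_of_tendsto_of_tendsto_of_le_of_le' (neg_zero (G := ℝ) ▸ hup.neg) hup ?_ ?_
    · filter_upwards [eventually_ge_atTop (1:ℝ)] with t ht
      have hlt : |Real.log t| ≤ t := by
        rw [abs_of_nonneg (Real.log_nonneg ht)]
        linarith [Real.log_le_sub_one_of_pos (by linarith : (0:ℝ) < t)]
      have := mul_le_mul_of_nonneg_left (neg_le_of_abs_le hlt) (Real.exp_pos (-t)).le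
      nlinarith [Real.exp_pos (-t)]
    · filter_upwards [eventually_ge_atTop (1:ℝ)] with t ht
      have hlt : |Real.log t| ≤ t := by
        rw [abs_of_nonneg (Real.log_nonneg ht)]
        linarith [Real.log_le_sub_one_of_pos (by linarith : (0:ℝ) < t)]
      nlinarith [Real.exp_pos (-t), le_of_abs_le hlt]
  have := integral_Ioi_of_hasDerivAt_of_tendsto' hderiv hint hlim
  rw [this]
  simp



lemma IBP2 {x : ℝ} (hx : 0 < x) :
    ∫ t in Set.Ioc 0 x, (Real.log t * Real.exp (-t) + (1 - Real.exp (-t)) / t)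
      = (1 - Real.exp (-x)) * Real.log x := by
  have hint : IntegrableOn
      (fun t : ℝ => Real.log t * Real.exp (-t) + (1 - Real.exp (-t)) / t) (Set.Ioc 0 x) :=
    (intLogExp.mono_set Set.Ioc_subset_Ioi_self).add (intOneSubExpDiv hx)
  have hd : ∀ t ∈ Set.Ioc (0:ℝ) x, HasDerivAt (fun t : ℝ => (1 - Real.exp (-t)) * Real.log t)
      (Real.log t * Real.exp (-t) + (1 - Real.exp (-t)) / t) t := by
    intro t ht
    have ht0 : 0 < t := ht.1
    have h1 : HasDerivAt (fun t : ℝ => 1 - Real.exp (-t)) (Real.exp (-t)) t := by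
      have : HasDerivAt (fun t : ℝ => Real.exp (-t)) (Real.exp (-t) * (-1)) t :=
        (hasDerivAt_neg t).exp
      simpa using this.const_sub 1
    have h2 := h1.mul (Real.hasDerivAt_log ht0.ne')
    refine h2.congr_deriv ?_
    rw [div_eq_mul_inv]
    ring
  have hm : Tendsto (fun t : ℝ => (1 - Real.exp (-t)) * Real.log t) (𝓝[>] (0:ℝ)) (𝓝 0) := by
    have hlow : Tendsto (fun t : ℝ => Real.log t * t) (𝓝[>] (0:ℝ)) (𝓝 0) := by
      have := tendsto_log_mul_rpow_nhdsGT_zero (r := 1) one_pos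
      refine this.congr' ?_
      filter_upwards [self_mem_nhdsWithin] with t (ht : (0:ℝ) < t)
      rw [Real.rpow_one]
    refine tendsto_of_tendsto_of_tendsto_of_le_of_le' hlow tendsto_const_nhds ?_ ?_
    · filter_upwards [Ioo_mem_nhdsGT_of_mem (Set.mem_Ico.mpr ⟨le_rfl, zero_lt_one⟩)]
        with t ht
      have ht0 : 0 < t := ht.1
      have hlog : Real.log t ≤ 0 := Real.log_nonpos ht0.le ht.2.le
      have hle : 1 - Real.exp (-t) ≤ t := by linarith [Real.add_one_le_exp (-t)]
      nlinarith
    · filter_upwards [Ioo_mem_nhdsGT_of_mem (Set.mem_Ico.mpr ⟨le_rfl, zero_lt_one⟩)]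
        with t ht
      have ht0 : 0 < t := ht.1
      have hlog : Real.log t ≤ 0 := Real.log_nonpos ht0.le ht.2.le
      have hnn : 0 ≤ 1 - Real.exp (-t) := by
        have : Real.exp (-t) ≤ 1 := Real.exp_le_one_iff.mpr (by linarith)
        linarith
      nlinarith
  have := integral_Ioc_of_hasDerivAt_of_tendsto' hx hd hint hm
  rw [this]
  simp

/-- For real `x > 0`, the integral `∫_x^∞ e^{-t}/t dt` equals the series expansion
`-γ - log x - ∑_{k=1}^∞ (-x)^k / (k·k!)` of the exponential integral `E₁`. -/
theorem expIntegral_eq_series (x : ℝ) (hx : 0 < x) :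
    ∫ t in Set.Ioi x, Real.exp (-t) / t =
      -Real.eulerMascheroniConstant - Real.log x -
        ∑' k : ℕ, (-x) ^ (k + 1) / (((k + 1) * Nat.factorial (k + 1) : ℕ) : ℝ) := by
  have hBx : IntegrableOn (fun t : ℝ => Real.log t * Real.exp (-t)) (Set.Ioi x) :=
    intLogExp.mono_set (Set.Ioi_subset_Ioi hx.le)
  have hBc : IntegrableOn (fun t : ℝ => Real.log t * Real.exp (-t)) (Set.Ioc 0 x) :=
    intLogExp.mono_set Set.Ioc_subset_Ioi_self
  -- split the gamma integral
  have hsplit := setIntegral_union (Set.Ioc_disjoint_Ioi le_rfl) measurableSet_Ioi hBc hBx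
  rw [Set.Ioc_union_Ioi_eq_Ioi hx.le, gammaConst] at hsplit
  -- value of the Ioc integral of log * exp
  set T : ℝ := ∑' k : ℕ, (-1:ℝ)^k * x^(k+1) / ((k+1) * (Nat.factorial (k+1) : ℝ)) with hT
  have hC : ∫ t in Set.Ioc 0 x, Real.log t * Real.exp (-t)
      = (1 - Real.exp (-x)) * Real.log x - T := by
    have h1 := IBP2 hx
    rw [integral_add hBc (intOneSubExpDiv hx), seriesInt hx] at h1
    linarith
  -- the series in the statement equals -T
  have hS : (∑' k : ℕ, (-x) ^ (k + 1) / (((k + 1) * Nat.factorial (k + 1) : ℕ) : ℝ)) = -T := by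
    rw [hT, ← tsum_neg]
    apply tsum_congr
    intro k
    push_cast
    rw [neg_pow]
    ring
  -- decompose the main integral
  have hmain : ∫ t in Set.Ioi x, Real.exp (-t) / t
      = (∫ t in Set.Ioi x, (Real.exp (-t) / t - Real.log t * Real.exp (-t)))
        + ∫ t in Set.Ioi x, Real.log t * Real.exp (-t) := by
    have h1 : IntegrableOn
        (fun t : ℝ => Real.exp (-t) / t - Real.log t * Real.exp (-t)) (Set.Ioi x) :=
      (intExpDiv hx).sub hBx
    rw [← integral_add h1 hBx]
    congr 1
    funext t
    ring
  rw [hmain, IBP1 hx, hS]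
  have hlogx : Real.exp (-x) * Real.log x + (1 - Real.exp (-x)) * Real.log x
      = Real.log x := by ring
  linarith
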